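/- arXiv:1006.0325 — 3 statements merged into one kernel-verified Lean document; each statement's English description precedes it below -/
import Mathlib

section
/- Let M be a loopless matroid of rank 3 on a finite ground set with n elements such that every circuit of M has at least 3 elements, and let (h_0, h_1, h_2, h_3) be the h-vector of M. Then h_3 = 0 or h_3 ≥ C(n−2, 2) − 1, where C(n,k) denotes the binomial coefficient. -/
/-- The degree of a monomial, modeled as a finitely supported exponent vector. -/
def monDeg {r : ℕ} (m : Fin r →₀ ℕ) : ℕ := m.sum fun _ e => e

/-- A (monomial) order ideal: a finite nonempty set of monomials closed under divisibility. -/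
def IsOrderIdeal {r : ℕ} (X : Finset (Fin r →₀ ℕ)) : Prop :=
  X.Nonempty ∧ ∀ m ∈ X, ∀ n : Fin r →₀ ℕ, n ≤ m → n ∈ X

/-- An order ideal is pure if all its maximal monomials (w.r.t. divisibility) have
the same degree. -/
def IsPureSet {r : ℕ} (X : Finset (Fin r →₀ ℕ)) : Prop :=
  ∀ m ∈ X, ∀ n ∈ X, (∀ p ∈ X, m ≤ p → p = m) → (∀ p ∈ X, n ≤ p → p = n) →
    monDeg m = monDeg n

/-- The number of monomials of `X` of degree `i`. -/
def degCount {r : ℕ} (X : Finset (Fin r →₀ ℕ)) (i : ℕ) : ℕ :=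
  (X.filter fun m => monDeg m = i).card

/-- `h` is the h-vector `(h_0, …, h_e)` of `X`, where `e` is the top degree of `X`. -/
def IsHVectorOf {r : ℕ} (X : Finset (Fin r →₀ ℕ)) (h : List ℕ) : Prop :=
  h ≠ [] ∧ (∀ i, degCount X i = h.getD i 0) ∧ degCount X (h.length - 1) ≠ 0

/-- A finite sequence is an O-sequence if it is the h-vector of a monomial order ideal. -/
def IsOSequence (h : List ℕ) : Prop :=
  ∃ (r : ℕ) (X : Finset (Fin r →₀ ℕ)), IsOrderIdeal X ∧ IsHVectorOf X h

/-- A finite sequence is a pure O-sequence if it is the h-vector of a pure monomial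
order ideal. -/
def IsPureOSequence (h : List ℕ) : Prop :=
  ∃ (r : ℕ) (X : Finset (Fin r →₀ ℕ)), IsOrderIdeal X ∧ IsPureSet X ∧ IsHVectorOf X h
/-- `matroidF M i` is the number `f_{i-1}` of independent sets of `M` of cardinality `i`. -/
noncomputable def matroidF {α : Type*} (M : Matroid α) (i : ℕ) : ℕ :=
  {I : Set α | M.Indep I ∧ I.ncard = i}.ncard

/-- The `j`-th entry of the h-vector of a rank-`d` matroid `M`:
`h_j = ∑_{i=0}^{j} (-1)^{j-i} C(d-i, j-i) f_{i-1}`. -/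
noncomputable def matroidH {α : Type*} (M : Matroid α) (d j : ℕ) : ℤ :=
  ∑ i ∈ Finset.range (j + 1),
    (-1 : ℤ) ^ (j - i) * ((d - i).choose (j - i)) * (matroidF M i)

/-- A loop: an element of the ground set belonging to no independent set. -/
def IsLoopElem {α : Type*} (M : Matroid α) (v : α) : Prop :=
  v ∈ M.E ∧ ¬ M.Indep {v}

/-- A coloop: an element of the ground set contained in every basis. -/
def IsColoopElem {α : Type*} (M : Matroid α) (v : α) : Prop :=
  v ∈ M.E ∧ ∀ B, M.IsBase B → v ∈ B

/-- A circuit: a minimal dependent set. -/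
def IsCircuitSet {α : Type*} (M : Matroid α) (C : Set α) : Prop :=
  C ⊆ M.E ∧ ¬ M.Indep C ∧ ∀ D, D ⊂ C → M.Indep D

lemma two_mul_choose_two : ∀ k : ℕ, 2 * k.choose 2 = k * (k - 1)
  | 0 => rfl
  | 1 => rfl
  | (j+2) => by
    rw [Nat.choose_succ_succ, Nat.mul_add, two_mul_choose_two (j+1), Nat.choose_one_right]
    rw [show j + 2 - 1 = j + 1 from rfl, show j + 1 - 1 = j from rfl]
    ring

lemma pair_indep_of_girth {α : Type*} (M : Matroid α)
    (hloopless : ∀ v ∈ M.E, M.Indep {v})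
    (hgirth : ∀ C, IsCircuitSet M C → 3 ≤ C.ncard)
    {x y : α} (hx : x ∈ M.E) (hy : y ∈ M.E) : M.Indep {x, y} := by
  by_cases hxy : x = y
  · subst hxy; simpa using hloopless x hx
  by_contra hdep
  have hcirc : IsCircuitSet M {x, y} := by
    refine ⟨by simp [Set.insert_subset_iff, hx, hy], hdep, ?_⟩
    intro D hD
    have hsub : D ⊆ {x, y} := hD.subset
    by_cases hxD : x ∈ D
    · by_cases hyD : y ∈ D
      · exact absurd (subset_antisymm hsub (by simp [Set.insert_subset_iff, hxD, hyD]))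
          hD.ne
      · have : D ⊆ {x} := by
          intro z hz; rcases hsub hz with h | h
          · simp [h]
          · exact absurd (h ▸ hz) hyD
        exact (hloopless x hx).subset this
    · have : D ⊆ {y} := by
        intro z hz; rcases hsub hz with h | h
        · exact absurd (h ▸ hz) hxD
        · simp [h]
      exact (hloopless y hy).subset this
  have := hgirth _ hcirc
  rw [Set.ncard_pair hxy] at this
  omega

lemma indep_encard_le_of_subset_closure {α : Type*} {M : Matroid α} {I J : Set α}
    (hI : M.Indep I) (hJ : M.Indep J) (hIJ : I ⊆ M.closure J) : I.encard ≤ J.encard := by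
  by_contra hlt
  push_neg at hlt
  obtain ⟨e, he, hins⟩ := hJ.augment hI hlt
  have heJ : e ∉ J := he.2
  rw [hJ.insert_indep_iff_of_notMem heJ] at hins
  exact hins.2 (hIJ he.1)

noncomputable def lineF {α : Type*} (M : Matroid α) (hfin : M.E.Finite) (p : Finset α) :
    Finset α := (hfin.subset (M.closure_subset_ground ↑p)).toFinset

lemma mem_lineF {α : Type*} {M : Matroid α} {hfin : M.E.Finite} {p : Finset α} {z : α} :
    z ∈ lineF M hfin p ↔ z ∈ M.closure ↑p := Set.Finite.mem_toFinset _

lemma lineF_subset {α : Type*} {M : Matroid α} {hfin : M.E.Finite} {p : Finset α} :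
    lineF M hfin p ⊆ hfin.toFinset := fun _ hz =>
  hfin.mem_toFinset.2 (M.closure_subset_ground _ (mem_lineF.1 hz))

lemma subset_lineF {α : Type*} {M : Matroid α} {hfin : M.E.Finite} {p : Finset α}
    (hp : ↑p ⊆ M.E) : p ⊆ lineF M hfin p := fun _ hz =>
  mem_lineF.2 (M.subset_closure ↑p hp hz)

lemma closure_pair_eq {α : Type*} {M : Matroid α} {p q : Finset α}
    (hp : M.Indep ↑p) (hpc : p.card = 2) (hq : M.Indep ↑q) (hqc : q.card = 2)
    (hsub : ↑q ⊆ M.closure ↑p) : M.closure (↑q : Set α) = M.closure ↑p := by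
  refine subset_antisymm (M.closure_subset_closure_of_subset_closure hsub) ?_
  refine M.closure_subset_closure_of_subset_closure ?_
  intro x hx
  by_cases hxq : x ∈ (↑q : Set α)
  · exact M.subset_closure ↑q hq.subset_ground hxq
  · have hxE : x ∈ M.E := hp.subset_ground hx
    by_contra hxcl
    have hins : M.Indep (insert x ↑q) := by
      rw [hq.insert_indep_iff_of_notMem hxq]
      exact ⟨hxE, hxcl⟩
    have hsub3 : insert x (↑q : Set α) ⊆ M.closure ↑p :=
      Set.insert_subset (M.subset_closure ↑p hp.subset_ground hx) hsub
    have hle := indep_encard_le_of_subset_closure hins hp hsub3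
    rw [Set.encard_insert_of_notMem hxq, Set.encard_coe_eq_coe_finsetCard,
      Set.encard_coe_eq_coe_finsetCard, hpc, hqc] at hle
    norm_num at hle

lemma lineF_congr {α : Type*} {M : Matroid α} {hfin : M.E.Finite} {p q : Finset α}
    (h : M.closure (↑p : Set α) = M.closure ↑q) : lineF M hfin p = lineF M hfin q := by
  ext z; rw [mem_lineF, mem_lineF, h]

section
variable {α : Type*} [DecidableEq α] {M : Matroid α} (hfin : M.E.Finite)
variable [DecidablePred fun s : Finset α => M.Indep (s : Set α)]

set_option linter.unusedSectionVars false

lemma P2_indep (hloopless : ∀ v ∈ M.E, M.Indep {v})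
    (hgirth : ∀ C, IsCircuitSet M C → 3 ≤ C.ncard)
    {p : Finset α} (hp : p ∈ hfin.toFinset.powersetCard 2) : M.Indep ↑p := by
  rw [Finset.mem_powersetCard] at hp
  obtain ⟨a, b, hab, rfl⟩ := Finset.card_eq_two.1 hp.2
  have ha : a ∈ M.E := hfin.mem_toFinset.1 (hp.1 (by simp))
  have hb : b ∈ M.E := hfin.mem_toFinset.1 (hp.1 (by simp))
  simpa using pair_indep_of_girth M hloopless hgirth ha hb

lemma sum_line_compl (hloopless : ∀ v ∈ M.E, M.Indep {v})
    (hgirth : ∀ C, IsCircuitSet M C → 3 ≤ C.ncard) :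
    ∑ p ∈ hfin.toFinset.powersetCard 2, (hfin.toFinset \ lineF M hfin p).card
      = 3 * ((hfin.toFinset.powersetCard 3).filter fun s : Finset α =>
          M.Indep (s : Set α)).card := by
  classical
  set V := hfin.toFinset with hVdef
  set P3I := (V.powersetCard 3).filter (fun s : Finset α => M.Indep (s : Set α)) with hP3I
  rw [← Finset.card_sigma]
  have hmap : ∀ x ∈ (V.powersetCard 2).sigma fun p => V \ lineF M hfin p,
      insert x.2 x.1 ∈ P3I := by
    rintro ⟨p, z⟩ hx
    rw [Finset.mem_sigma] at hx
    obtain ⟨hp, hz⟩ := hx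
    rw [Finset.mem_sdiff] at hz
    have hpV := (Finset.mem_powersetCard.1 hp).1
    have hpc := (Finset.mem_powersetCard.1 hp).2
    have hpE : (↑p : Set α) ⊆ M.E := fun w hw => hfin.mem_toFinset.1 (hpV hw)
    have hzp : z ∉ p := fun h => hz.2 (subset_lineF hpE h)
    have hzE : z ∈ M.E := hfin.mem_toFinset.1 hz.1
    have hpind : M.Indep ↑p := P2_indep hfin hloopless hgirth hp
    have hind : M.Indep (insert z (↑p : Set α)) := by
      rw [hpind.insert_indep_iff_of_notMem (by simpa using hzp)]
      exact ⟨hzE, fun h => hz.2 (mem_lineF.2 h)⟩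
    rw [hP3I, Finset.mem_filter, Finset.mem_powersetCard]
    refine ⟨⟨Finset.insert_subset hz.1 hpV, ?_⟩, by simpa using hind⟩
    rw [Finset.card_insert_of_notMem hzp, hpc]
  rw [Finset.card_eq_sum_card_fiberwise hmap]
  have hfib : ∀ s ∈ P3I,
      (((V.powersetCard 2).sigma fun p => V \ lineF M hfin p).filter
        fun x => insert x.2 x.1 = s).card = 3 := by
    intro s hs
    rw [hP3I, Finset.mem_filter, Finset.mem_powersetCard] at hs
    obtain ⟨⟨hsV, hsc⟩, hsind⟩ := hs
    rw [show (3:ℕ) = s.card from hsc.symm]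
    refine Finset.card_bij' (fun x _ => x.2) (fun z _ => ⟨s.erase z, z⟩) ?_ ?_ ?_ ?_
    · rintro ⟨p, z⟩ hx
      rw [Finset.mem_filter] at hx
      exact hx.2 ▸ Finset.mem_insert_self z p
    · intro z hz
      rw [Finset.mem_filter, Finset.mem_sigma]
      have hzs : z ∈ s := hz
      have hcard : (s.erase z).card = 2 := by rw [Finset.card_erase_of_mem hzs, hsc]
      have herase_sub : s.erase z ⊆ V := (Finset.erase_subset _ _).trans hsV
      refine ⟨⟨Finset.mem_powersetCard.2 ⟨herase_sub, hcard⟩, ?_⟩, Finset.insert_erase hzs⟩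
      rw [Finset.mem_sdiff]
      refine ⟨hsV hzs, fun hmem => ?_⟩
      have hzc : z ∈ M.closure ↑(s.erase z) := mem_lineF.1 hmem
      rw [Finset.coe_erase] at hzc
      have := (M.indep_iff_forall_notMem_closure_diff (by
        exact fun w hw => hfin.mem_toFinset.1 (hsV hw))).1 hsind (Finset.mem_coe.2 hzs)
      exact this hzc
    · rintro ⟨p, z⟩ hx
      rw [Finset.mem_filter, Finset.mem_sigma] at hx
      obtain ⟨⟨hp, hz⟩, heq⟩ := hx
      have hpE : (↑p : Set α) ⊆ M.E := fun w hw =>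
        hfin.mem_toFinset.1 ((Finset.mem_powersetCard.1 hp).1 hw)
      have hzp : z ∉ p := fun h => (Finset.mem_sdiff.1 hz).2 (subset_lineF hpE h)
      have : s.erase z = p := by rw [← heq, Finset.erase_insert hzp]
      simp [this]
    · intro z hz; rfl
  rw [Finset.sum_congr rfl hfib, Finset.sum_const, smul_eq_mul, mul_comm]

lemma matroidF_eq (k : ℕ) :
    matroidF M k
      = ((hfin.toFinset.powersetCard k).filter fun s : Finset α => M.Indep (s : Set α)).card := by
  classical
  rw [matroidF]
  have himg : {I : Set α | M.Indep I ∧ I.ncard = k} =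
      ↑(((hfin.toFinset.powersetCard k).filter fun s : Finset α => M.Indep (s : Set α)).image
        (fun s : Finset α => (↑s : Set α))) := by
    ext I
    simp only [Finset.coe_image, Set.mem_image, Finset.mem_coe, Finset.mem_filter,
      Finset.mem_powersetCard, Set.mem_setOf_eq]
    constructor
    · rintro ⟨hI, hcard⟩
      have hIfin : I.Finite := hfin.subset hI.subset_ground
      refine ⟨hIfin.toFinset, ⟨⟨?_, ?_⟩, ?_⟩, hIfin.coe_toFinset⟩
      · intro x hx
        exact hfin.mem_toFinset.2 (hI.subset_ground (hIfin.mem_toFinset.1 hx))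
      · rw [← hcard, Set.ncard_eq_toFinset_card _ hIfin]
      · rw [hIfin.coe_toFinset]; exact hI
    · rintro ⟨s, ⟨⟨hsub, hcard⟩, hind⟩, rfl⟩
      exact ⟨hind, by rw [Set.ncard_coe_finset, hcard]⟩
  rw [himg, Set.ncard_coe_finset, Finset.card_image_of_injective _ Finset.coe_injective]

lemma matroidH_33 : matroidH M 3 3 =
    (matroidF M 3 : ℤ) - matroidF M 2 + matroidF M 1 - matroidF M 0 := by
  rw [matroidH]
  rw [Finset.sum_range_succ, Finset.sum_range_succ, Finset.sum_range_succ,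
    Finset.sum_range_succ, Finset.sum_range_zero]
  norm_num
  ring

lemma F0_eq : ((hfin.toFinset.powersetCard 0).filter fun s : Finset α =>
    M.Indep (s : Set α)).card = 1 := by
  rw [Finset.powersetCard_zero]
  rw [Finset.filter_singleton]
  simp [M.empty_indep]

lemma F1_eq (hloopless : ∀ v ∈ M.E, M.Indep {v}) :
    ((hfin.toFinset.powersetCard 1).filter fun s : Finset α =>
      M.Indep (s : Set α)).card = hfin.toFinset.card := by
  rw [Finset.filter_true_of_mem, Finset.card_powersetCard, Nat.choose_one_right]
  intro s hs
  rw [Finset.mem_powersetCard] at hs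
  obtain ⟨a, rfl⟩ := Finset.card_eq_one.1 hs.2
  have ha : a ∈ M.E := hfin.mem_toFinset.1 (hs.1 (by simp))
  simpa using hloopless a ha

lemma F2_eq (hloopless : ∀ v ∈ M.E, M.Indep {v})
    (hgirth : ∀ C, IsCircuitSet M C → 3 ≤ C.ncard) :
    ((hfin.toFinset.powersetCard 2).filter fun s : Finset α =>
      M.Indep (s : Set α)).card = hfin.toFinset.card.choose 2 := by
  rw [Finset.filter_true_of_mem, Finset.card_powersetCard]
  intro s hs
  exact P2_indep hfin hloopless hgirth hs

end

lemma polyB {m t : ℤ} (ht : 2 ≤ t) (hmt : t + 1 ≤ m) :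
    6*(m+t-1)*(m+t-3) ≤ m*(m-1)*t + ((m+t)*(m+t-1) - m*(m-1))*m - (t+1)*t := by
  rcases eq_or_lt_of_le ht with h2 | h3
  · rw [← h2]; nlinarith []
  · have h3' : 3 ≤ t := h3
    nlinarith [mul_nonneg (mul_nonneg (sub_nonneg.2 (by linarith : (1:ℤ) + t ≤ m))
        (sub_nonneg.2 (by linarith : (2:ℤ) ≤ t))) (sub_nonneg.2 (by linarith : (6:ℤ) ≤ 7*t)),
      mul_nonneg (mul_nonneg (sub_nonneg.2 (by linarith : (2:ℤ) ≤ t))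
        (sub_nonneg.2 (by linarith : (3:ℤ) ≤ t))) (by linarith : (0:ℤ) ≤ t),
      mul_nonneg (mul_nonneg (sub_nonneg.2 (by linarith : (1:ℤ) + t ≤ m))
        (sub_nonneg.2 (by linarith : (2:ℤ) ≤ t))) (sub_nonneg.2 (by linarith : (1:ℤ) + t ≤ m))]

lemma caseA_arith {n t Cn F3 : ℤ} (hn : 3 ≤ n) (ht : 0 ≤ t)
    (hcn : 2*Cn = n*(n-1)) (hq1 : Cn*t ≤ 3*F3) (h2t : n ≤ 2*t) :
    (n-1)*(n-3) ≤ F3 := by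
  have e : 2*Cn*t = n*(n-1)*t := by rw [hcn]
  have h1 : 0 ≤ n*(n-1)*(2*t - n) :=
    mul_nonneg (mul_nonneg (by linarith) (by linarith)) (by linarith)
  have h2 : 0 ≤ (n-1)*(n-6)^2 := mul_nonneg (by linarith) (sq_nonneg _)
  nlinarith [e, h1, h2, hq1]

lemma caseB_arith {m t I Cn Ct q r F3 : ℤ} (ht2 : 2 ≤ t) (htm : t + 1 ≤ m)
    (hI : 2*I = m*(m-1)) (hCn : 2*Cn = (m+t)*(m+t-1)) (hCt : 2*Ct = (t+1)*t)
    (hsum : I + (q + r) = Cn) (hq : q ≤ Ct)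
    (hS : I*t + (q*(m-1) + r*m) ≤ 3*F3) :
    (m+t-1)*(m+t-3) ≤ F3 := by
  have A := polyB ht2 htm
  have e1 : 2*I*t = m*(m-1)*t := by rw [hI]
  have e3 : 2*I*m = m*(m-1)*m := by rw [hI]
  have e5 : 2*Cn*m = (m+t)*(m+t-1)*m := by rw [hCn]
  have e6 : (I + (q + r))*m = Cn*m := by rw [hsum]
  nlinarith [A, e1, e3, e5, e6, hS, hq, hCt]

lemma final_arith {n F3 Cn2 Cn : ℤ} (hn : 3 ≤ n)
    (h1 : 2*Cn2 = (n-2)*(n-3)) (h2 : 2*Cn = n*(n-1))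
    (hF3 : (n-1)*(n-3) ≤ F3) :
    Cn2 - 1 ≤ F3 - Cn + n - 1 := by
  nlinarith [h1, h2, hF3]

lemma coloop_arith {n F3 Cn1 Cn : ℤ} (hn : 3 ≤ n)
    (hF3 : F3 = Cn1) (h1 : 2*Cn1 = (n-1)*(n-2)) (h2 : 2*Cn = n*(n-1)) :
    F3 - Cn + n - 1 = 0 := by
  nlinarith [h1, h2, hF3]

lemma choose2_cast (a : ℕ) (h : 1 ≤ a) :
    2 * ((a.choose 2 : ℕ) : ℤ) = (a:ℤ) * ((a:ℤ)-1) := by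
  have h2 := two_mul_choose_two a
  zify [h] at h2
  linarith
section
variable {α : Type*} [DecidableEq α] {M : Matroid α} (hfin : M.E.Finite)
variable [DecidablePred fun s : Finset α => M.Indep (s : Set α)]

set_option linter.unusedSectionVars false

include hfin in
lemma encard_base_eq (hrank : ∃ B, M.IsBase B ∧ B.ncard = 3) :
    ∀ B, M.IsBase B → B.encard = 3 := by
  obtain ⟨B₀, hB₀, hc⟩ := hrank
  have hfB₀ : B₀.Finite := hfin.subset hB₀.subset_ground
  have h0 : B₀.encard = 3 := by
    rw [hfB₀.encard_eq_coe_toFinset_card, ← Set.ncard_eq_toFinset_card _ hfB₀, hc]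
    rfl
  intro B hB
  rw [hB.encard_eq_encard_of_isBase hB₀, h0]

lemma F3_coloop (hloopless : ∀ v ∈ M.E, M.Indep {v})
    (hgirth : ∀ C, IsCircuitSet M C → 3 ≤ C.ncard)
    (hrank : ∃ B, M.IsBase B ∧ B.ncard = 3) {v : α} (hv : IsColoopElem M v) :
    ((hfin.toFinset.powersetCard 3).filter fun s : Finset α => M.Indep (s : Set α)).card
      = (hfin.toFinset.card - 1).choose 2 := by
  classical
  have hBall := encard_base_eq hfin hrank
  have hvV : v ∈ hfin.toFinset := hfin.mem_toFinset.2 hv.1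
  have himg : (hfin.toFinset.powersetCard 3).filter (fun s : Finset α => M.Indep (s : Set α))
      = ((hfin.toFinset.erase v).powersetCard 2).image (fun q => insert v q) := by
    ext s
    simp only [Finset.mem_filter, Finset.mem_powersetCard, Finset.mem_image]
    constructor
    · rintro ⟨⟨hsV, hsc⟩, hind⟩
      obtain ⟨B, hB, hsub⟩ := hind.exists_isBase_superset
      have hBfin : B.Finite := hfin.subset hB.subset_ground
      have hseq : (↑s : Set α) = B := hBfin.eq_of_subset_of_encard_le' hsub
        (by rw [hBall B hB, Set.encard_coe_eq_coe_finsetCard, hsc]; rfl)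
      have hvs : v ∈ s := by
        have h2 := hv.2 B hB
        rw [← hseq] at h2
        exact Finset.mem_coe.1 h2
      refine ⟨s.erase v, ⟨?_, ?_⟩, Finset.insert_erase hvs⟩
      · intro x hx
        exact Finset.mem_erase.2 ⟨(Finset.mem_erase.1 hx).1, hsV (Finset.mem_of_mem_erase hx)⟩
      · rw [Finset.card_erase_of_mem hvs, hsc]
    · rintro ⟨q, hq, rfl⟩
      obtain ⟨hqsub, hqc⟩ := hq
      have hvq : v ∉ q := fun h => (Finset.mem_erase.1 (hqsub h)).1 rfl
      have hqV : q ⊆ hfin.toFinset := fun x hx => Finset.mem_of_mem_erase (hqsub hx)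
      have hqind : M.Indep (q : Set α) :=
        P2_indep hfin hloopless hgirth (Finset.mem_powersetCard.2 ⟨hqV, hqc⟩)
      obtain ⟨B, hB, hsub⟩ := hqind.exists_isBase_superset
      have hBfin : B.Finite := hfin.subset hB.subset_ground
      have hins_sub : insert v (↑q : Set α) ⊆ B := Set.insert_subset (hv.2 B hB) hsub
      have hinsc : (insert v (↑q : Set α)).encard = 3 := by
        rw [Set.encard_insert_of_notMem (by simpa using hvq),
          Set.encard_coe_eq_coe_finsetCard, hqc]
        rfl
      have heqB : insert v (↑q : Set α) = B :=
        hBfin.eq_of_subset_of_encard_le' hins_sub (by rw [hBall B hB, hinsc])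
      have hind : M.Indep (insert v (↑q : Set α)) := heqB ▸ hB.indep
      refine ⟨⟨Finset.insert_subset hvV hqV, ?_⟩, by simpa using hind⟩
      rw [Finset.card_insert_of_notMem hvq, hqc]
  rw [himg, Finset.card_image_of_injOn, Finset.card_powersetCard,
    Finset.card_erase_of_mem hvV]
  intro q hq q' hq' heq
  have hq1 := Finset.mem_powersetCard.1 (Finset.mem_coe.1 hq)
  have hq1' := Finset.mem_powersetCard.1 (Finset.mem_coe.1 hq')
  have hvq : v ∉ q := fun h => (Finset.mem_erase.1 (hq1.1 h)).1 rfl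
  have hvq' : v ∉ q' := fun h => (Finset.mem_erase.1 (hq1'.1 h)).1 rfl
  have heq' : insert v q = insert v q' := heq
  rw [← Finset.erase_insert hvq, heq', Finset.erase_insert hvq']

end
/-- Let `M` be a loopless matroid of rank 3 on a finite ground set with `n` elements
all of whose circuits have at least 3 elements, and let `(h₀,h₁,h₂,h₃)` be the
h-vector of `M`. Then `h₃ = 0` or `h₃ ≥ C(n-2,2) - 1`. -/
theorem h3_zero_or_large {α : Type*} (M : Matroid α) (hfin : M.E.Finite)
    (hloopless : ∀ v ∈ M.E, M.Indep {v})
    (hrank : ∃ B, M.IsBase B ∧ B.ncard = 3)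
    (hgirth : ∀ C, IsCircuitSet M C → 3 ≤ C.ncard) :
    matroidH M 3 3 = 0 ∨
      ((M.E.ncard - 2).choose 2 : ℤ) - 1 ≤ matroidH M 3 3 := by
  classical
  obtain ⟨B₀, hB₀, hB₀c⟩ := hrank
  have hrank' : ∃ B, M.IsBase B ∧ B.ncard = 3 := ⟨B₀, hB₀, hB₀c⟩
  have hfB₀ : B₀.Finite := hfin.subset hB₀.subset_ground
  set V := hfin.toFinset with hVdef
  set n := V.card with hndef
  have hEn : M.E.ncard = n := Set.ncard_eq_toFinset_card _ hfin
  have hn3 : 3 ≤ n := by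
    have hsub : hfB₀.toFinset ⊆ V := fun x hx =>
      hfin.mem_toFinset.2 (hB₀.subset_ground (hfB₀.mem_toFinset.1 hx))
    have hcard : hfB₀.toFinset.card = 3 := by
      rw [← Set.ncard_eq_toFinset_card _ hfB₀, hB₀c]
    calc (3:ℕ) = hfB₀.toFinset.card := hcard.symm
    _ ≤ n := Finset.card_le_card hsub
  set F3 := ((V.powersetCard 3).filter fun s : Finset α => M.Indep (s : Set α)).card
    with hF3def
  have hH : matroidH M 3 3 = (F3 : ℤ) - ((n.choose 2 : ℕ) : ℤ) + (n : ℤ) - 1 := by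
    rw [matroidH_33 (M := M), matroidF_eq hfin 3, matroidF_eq hfin 2, matroidF_eq hfin 1,
      matroidF_eq hfin 0, F0_eq hfin, F1_eq hfin hloopless, F2_eq hfin hloopless hgirth]
    push_cast
    ring
  have hCnZ : 2 * ((n.choose 2 : ℕ) : ℤ) = (n:ℤ) * ((n:ℤ)-1) :=
    choose2_cast n (by omega)
  rw [hEn]
  by_cases hco : ∃ v, IsColoopElem M v
  · left
    obtain ⟨v, hv⟩ := hco
    rw [hH, hF3def, F3_coloop hfin hloopless hgirth hrank' hv]
    rw [show hfin.toFinset.card = n from rfl]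
    have hC1 : 2 * (((n-1).choose 2 : ℕ) : ℤ) = ((n:ℤ)-1) * ((n:ℤ)-2) := by
      have h := choose2_cast (n-1) (by omega)
      have hcast : ((n-1 : ℕ) : ℤ) = (n:ℤ) - 1 := by
        push_cast [Nat.cast_sub (show 1 ≤ n by omega)]
        ring
      rw [hcast] at h
      rw [h]
      ring
    exact coloop_arith (by exact_mod_cast hn3) rfl hC1 hCnZ
  · right
    have hnc : ∀ w ∈ M.E, ∃ B, M.IsBase B ∧ w ∉ B := by
      intro w hw
      by_contra h
      push_neg at h
      exact hco ⟨w, hw, h⟩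
    have hBall := encard_base_eq hfin hrank'
    set L := fun p : Finset α => lineF M hfin p with hLdef
    set P2 := V.powersetCard 2 with hP2def
    set Ssum := ∑ p ∈ P2, (V \ L p).card with hSdef
    have hS : Ssum = 3 * F3 := sum_line_compl hfin hloopless hgirth
    have hLsubV : ∀ p : Finset α, L p ⊆ V := fun p => lineF_subset
    have hcardVL : ∀ p : Finset α, (V \ L p).card + (L p).card = n := fun p =>
      Finset.card_sdiff_add_card_eq_card (hLsubV p)
    have hNeα : Nonempty α := by
      obtain ⟨a, -⟩ := Finset.card_pos.1 (show 0 < V.card by omega)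
      exact ⟨a⟩
    have hcompl2 : ∀ p ∈ P2, 2 ≤ (V \ L p).card := by
      intro p hp
      by_contra hle
      push_neg at hle
      obtain ⟨x, hx⟩ := Finset.card_le_one_iff_subset_singleton.1
        (by omega : (V \ L p).card ≤ 1)
      have hpind : M.Indep (p : Set α) := P2_indep hfin hloopless hgirth hp
      have hpc := (Finset.mem_powersetCard.1 hp).2
      have hcontra : ∀ B, M.IsBase B → x ∉ B → False := by
        intro B hB hxB
        have hBsub : B ⊆ M.closure ↑p := by
          intro b hb
          have hbV : b ∈ V := hfin.mem_toFinset.2 (hB.subset_ground hb)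
          by_contra hbL
          have hbmem : b ∈ V \ L p :=
            Finset.mem_sdiff.2 ⟨hbV, fun h => hbL (mem_lineF.1 h)⟩
          have := hx hbmem
          rw [Finset.mem_singleton] at this
          exact hxB (this ▸ hb)
        have hle2 := indep_encard_le_of_subset_closure hB.indep hpind hBsub
        rw [hBall B hB, Set.encard_coe_eq_coe_finsetCard, hpc] at hle2
        norm_num at hle2
      by_cases hxV : x ∈ V
      · obtain ⟨B, hB, hxB⟩ := hnc x (hfin.mem_toFinset.1 hxV)
        exact hcontra B hB hxB
      · obtain ⟨B, hB⟩ := M.exists_isBase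
        exact hcontra B hB (fun hxB => hxV (hfin.mem_toFinset.2 (hB.subset_ground hxB)))
    have hP2ne : P2.Nonempty := by
      rw [hP2def]
      exact Finset.powersetCard_nonempty.2 (by omega)
    obtain ⟨p₀, hp₀, hmax⟩ := P2.exists_max_image (fun p => (L p).card) hP2ne
    set m := (L p₀).card with hmdef
    set t := (V \ L p₀).card with htdef
    have hp₀c := (Finset.mem_powersetCard.1 hp₀).2
    have hp₀L : p₀ ⊆ L p₀ := subset_lineF
      (fun w hw => hfin.mem_toFinset.1 ((Finset.mem_powersetCard.1 hp₀).1 hw))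
    have hm2 : 2 ≤ m := hp₀c ▸ Finset.card_le_card hp₀L
    have ht2 : 2 ≤ t := hcompl2 p₀ hp₀
    have hmtn : t + m = n := hcardVL p₀
    have hline_eq : ∀ p ∈ P2, ∀ q ∈ P2, q ⊆ L p → L q = L p := by
      intro p hp q hq hsub
      refine lineF_congr (closure_pair_eq (P2_indep hfin hloopless hgirth hp)
        (Finset.mem_powersetCard.1 hp).2 (P2_indep hfin hloopless hgirth hq)
        (Finset.mem_powersetCard.1 hq).2 ?_)
      intro w hw
      exact mem_lineF.1 (hsub (Finset.mem_coe.1 hw))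
    have hpairP2 : ∀ z w : α, z ∈ V → w ∈ V → z ≠ w → ({z, w} : Finset α) ∈ P2 := by
      intro z w hz hw hzw
      refine Finset.mem_powersetCard.2 ⟨?_, Finset.card_pair hzw⟩
      intro x hx
      rcases Finset.mem_insert.1 hx with h | h
      · exact h ▸ hz
      · exact (Finset.mem_singleton.1 h) ▸ hw
    rw [hH]
    -- it suffices to bound F3 from below
    have hmain : (n-1) * (n-3) ≤ F3 → ((((n - 2).choose 2 : ℕ)) : ℤ) - 1 ≤
        (F3 : ℤ) - ((n.choose 2 : ℕ) : ℤ) + (n : ℤ) - 1 := by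
      intro hF3
      have hF3' : ((n:ℤ)-1) * ((n:ℤ)-3) ≤ (F3 : ℤ) := by
        calc ((n:ℤ)-1) * ((n:ℤ)-3) = (((n-1) * (n-3) : ℕ) : ℤ) := by
              push_cast [Nat.cast_sub (show 1 ≤ n by omega),
                Nat.cast_sub (show 3 ≤ n by omega)]
              ring
        _ ≤ (F3 : ℤ) := by exact_mod_cast hF3
      have hC2 : 2 * (((n-2).choose 2 : ℕ) : ℤ) = ((n:ℤ)-2) * ((n:ℤ)-3) := by
        have h := choose2_cast (n-2) (by omega)
        have hcast : ((n-2 : ℕ) : ℤ) = (n:ℤ) - 2 := by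
          push_cast [Nat.cast_sub (show 2 ≤ n by omega)]
          ring
        rw [hcast] at h
        rw [h]
        ring
      exact final_arith (by exact_mod_cast hn3) hC2 hCnZ hF3'
    apply hmain
    have hP2card : P2.card = n.choose 2 := by
      rw [hP2def, Finset.card_powersetCard]
    by_cases hcase : m ≤ t
    · -- case A
      have hAS : P2.card * t ≤ Ssum := by
        rw [← smul_eq_mul, hSdef]
        apply Finset.card_nsmul_le_sum
        intro p hp
        have h1 : (L p).card ≤ m := hmax p hp
        have h2 := hcardVL p
        omega
      have hq1 : (n.choose 2) * t ≤ 3 * F3 := by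
        rw [← hS, ← hP2card]
        exact hAS
      have hgoalZ : ((n:ℤ)-1) * ((n:ℤ)-3) ≤ (F3:ℤ) := by
        refine caseA_arith (n := (n:ℤ)) (t := (t:ℤ)) (Cn := ((n.choose 2 : ℕ) : ℤ))
          (F3 := (F3:ℤ)) (by exact_mod_cast hn3) (by positivity) hCnZ ?_ ?_
        · exact_mod_cast hq1
        · exact_mod_cast (by omega : n ≤ 2 * t)
      have : (((n-1) * (n-3) : ℕ) : ℤ) ≤ (F3:ℤ) := by
        calc (((n-1) * (n-3) : ℕ) : ℤ) = ((n:ℤ)-1) * ((n:ℤ)-3) := by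
              push_cast [Nat.cast_sub (show 1 ≤ n by omega),
                Nat.cast_sub (show 3 ≤ n by omega)]
              ring
        _ ≤ (F3:ℤ) := hgoalZ
      exact_mod_cast this
    · -- case B
      push_neg at hcase
      have houter1 : ∀ p ∈ P2, ¬ p ⊆ L p₀ → (L p ∩ L p₀).card ≤ 1 := by
        intro p hp hnsub
        by_contra h2
        push_neg at h2
        obtain ⟨z, hz, w, hw, hzw⟩ := Finset.one_lt_card.1 h2
        have hzLp := (Finset.mem_inter.1 hz).1
        have hzL0 := (Finset.mem_inter.1 hz).2
        have hwLp := (Finset.mem_inter.1 hw).1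
        have hwL0 := (Finset.mem_inter.1 hw).2
        have hq : ({z, w} : Finset α) ∈ P2 :=
          hpairP2 z w (hLsubV p hzLp) (hLsubV p hwLp) hzw
        have hqLp : ({z, w} : Finset α) ⊆ L p := by
          intro x hx
          rcases Finset.mem_insert.1 hx with h | h
          · exact h ▸ hzLp
          · exact (Finset.mem_singleton.1 h) ▸ hwLp
        have hqL0 : ({z, w} : Finset α) ⊆ L p₀ := by
          intro x hx
          rcases Finset.mem_insert.1 hx with h | h
          · exact h ▸ hzL0
          · exact (Finset.mem_singleton.1 h) ▸ hwL0
        have e1 : L ({z, w} : Finset α) = L p := hline_eq p hp _ hq hqLp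
        have e2 : L ({z, w} : Finset α) = L p₀ := hline_eq p₀ hp₀ _ hq hqL0
        have hsubp : p ⊆ L p := subset_lineF
          (fun u hu => hfin.mem_toFinset.1 ((Finset.mem_powersetCard.1 hp).1 hu))
        rw [← e1, e2] at hsubp
        exact hnsub hsubp
      have houter_t1 : ∀ p ∈ P2, ¬ p ⊆ L p₀ → (L p).card ≤ t + 1 := by
        intro p hp hnsub
        have h0 := Finset.card_inter_add_card_sdiff (L p) (L p₀)
        have hsub : L p \ L p₀ ⊆ V \ L p₀ :=
          Finset.sdiff_subset_sdiff (hLsubV p) le_rfl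
        have h1 := Finset.card_le_card hsub
        have h2 := houter1 p hp hnsub
        omega
      set inner := P2.filter (fun p => p ⊆ L p₀) with hinner
      set outer := P2.filter (fun p => ¬ p ⊆ L p₀) with houterdef
      have hsplit : (∑ p ∈ inner, (V \ L p).card) + (∑ p ∈ outer, (V \ L p).card)
          = Ssum := Finset.sum_filter_add_sum_filter_not _ _ _
      have hinner_eq : ∀ p ∈ inner, (V \ L p).card = t := by
        intro p hp
        rw [Finset.mem_filter] at hp
        have : L p = L p₀ := hline_eq p₀ hp₀ p hp.1 hp.2
        rw [htdef, this]
      have hinner_sum : ∑ p ∈ inner, (V \ L p).card = inner.card * t := by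
        rw [Finset.sum_congr rfl hinner_eq, Finset.sum_const, smul_eq_mul]
      have hinner_card : inner.card = m.choose 2 := by
        have heq : inner = (L p₀).powersetCard 2 := by
          ext q
          simp only [hinner, Finset.mem_filter, Finset.mem_powersetCard, hP2def]
          constructor
          · rintro ⟨⟨hqV, hqc⟩, hqL⟩
            exact ⟨hqL, hqc⟩
          · rintro ⟨hqL, hqc⟩
            exact ⟨⟨hqL.trans (hLsubV p₀), hqc⟩, hqL⟩
        rw [heq, Finset.card_powersetCard]
      set Q := outer.filter (fun p => (L p).card = t + 1) with hQdef
      set Qc := outer.filter (fun p => ¬ (L p).card = t + 1) with hQcdef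
      have hQsplit : (∑ p ∈ Q, (V \ L p).card) + (∑ p ∈ Qc, (V \ L p).card)
          = ∑ p ∈ outer, (V \ L p).card := Finset.sum_filter_add_sum_filter_not _ _ _
      have hQsum : Q.card * (m - 1) ≤ ∑ p ∈ Q, (V \ L p).card := by
        rw [← smul_eq_mul]
        apply Finset.card_nsmul_le_sum
        intro p hp
        rw [hQdef, Finset.mem_filter] at hp
        have h2 := hcardVL p
        omega
      have hQcsum : Qc.card * m ≤ ∑ p ∈ Qc, (V \ L p).card := by
        rw [← smul_eq_mul]
        apply Finset.card_nsmul_le_sum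
        intro p hp
        rw [hQcdef, Finset.mem_filter, houterdef, Finset.mem_filter] at hp
        have h1 := houter_t1 p hp.1.1 hp.1.2
        have h2 := hcardVL p
        omega
      have hQQc : Q.card + Qc.card = outer.card :=
        Finset.card_filter_add_card_filter_not _
      have hIOcard : inner.card + outer.card = P2.card :=
        Finset.card_filter_add_card_filter_not _
      have hQcard : Q.card ≤ (t+1).choose 2 := by
        rcases Finset.eq_empty_or_nonempty Q with he | ⟨p₁, hp₁⟩
        · simp [he]
        · have hp₁o := Finset.mem_filter.1 hp₁
          have hp₁P2 : p₁ ∈ P2 := (Finset.mem_filter.1 hp₁o.1).1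
          have hp₁ns : ¬ p₁ ⊆ L p₀ := (Finset.mem_filter.1 hp₁o.1).2
          have hVL0_sub : ∀ p ∈ Q, V \ L p₀ ⊆ L p := by
            intro p hpQ
            obtain ⟨hpo, hpl⟩ := Finset.mem_filter.1 hpQ
            obtain ⟨hpP2, hpns⟩ := Finset.mem_filter.1 hpo
            have h1 := houter1 p hpP2 hpns
            have h0 := Finset.card_inter_add_card_sdiff (L p) (L p₀)
            have hsub : L p \ L p₀ ⊆ V \ L p₀ :=
              Finset.sdiff_subset_sdiff (hLsubV p) le_rfl
            have heq2 : L p \ L p₀ = V \ L p₀ :=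
              Finset.eq_of_subset_of_card_le hsub (by omega)
            rw [← heq2]
            exact Finset.sdiff_subset
          obtain ⟨z, hz, w, hw, hzw⟩ := Finset.one_lt_card.1
            (by omega : 1 < (V \ L p₀).card)
          have hzV := (Finset.mem_sdiff.1 hz).1
          have hwV := (Finset.mem_sdiff.1 hw).1
          have hqP2 : ({z, w} : Finset α) ∈ P2 := hpairP2 z w hzV hwV hzw
          have hLp1 : ∀ p ∈ Q, L p = L p₁ := by
            intro p hpQ
            have hpP2 : p ∈ P2 :=
              (Finset.mem_filter.1 (Finset.mem_filter.1 hpQ).1).1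
            have hsubzw : ∀ pp, pp ∈ Q → ({z, w} : Finset α) ⊆ L pp := by
              intro pp hpp
              intro x hx
              rcases Finset.mem_insert.1 hx with h | h
              · exact h ▸ (hVL0_sub pp hpp hz)
              · exact (Finset.mem_singleton.1 h) ▸ (hVL0_sub pp hpp hw)
            have e1 : L ({z, w} : Finset α) = L p :=
              hline_eq p hpP2 _ hqP2 (hsubzw p hpQ)
            have e2 : L ({z, w} : Finset α) = L p₁ :=
              hline_eq p₁ hp₁P2 _ hqP2 (hsubzw p₁ hp₁)
            rw [← e1, e2]
          have hQsubset : Q ⊆ (L p₁).powersetCard 2 := by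
            intro p hpQ
            have hpP2 : p ∈ P2 :=
              (Finset.mem_filter.1 (Finset.mem_filter.1 hpQ).1).1
            refine Finset.mem_powersetCard.2 ⟨?_, (Finset.mem_powersetCard.1 hpP2).2⟩
            have hpsub : p ⊆ L p := subset_lineF
              (fun u hu => hfin.mem_toFinset.1 ((Finset.mem_powersetCard.1 hpP2).1 hu))
            rw [hLp1 p hpQ] at hpsub
            exact hpsub
          calc Q.card ≤ ((L p₁).powersetCard 2).card := Finset.card_le_card hQsubset
          _ = (L p₁).card.choose 2 := Finset.card_powersetCard _ _
          _ ≤ (t+1).choose 2 := Nat.choose_le_choose 2 (houter_t1 p₁ hp₁P2 hp₁ns)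
      -- assemble
      have hSlb : inner.card * t + (Q.card * (m-1) + Qc.card * m) ≤ 3 * F3 := by
        rw [← hS, ← hsplit, hinner_sum, ← hQsplit]
        omega
      -- cast to ℤ and conclude
      have hm1 : 1 ≤ m := by omega
      have hSlbZ : ((m.choose 2 : ℕ) : ℤ) * (t:ℤ) +
          ((Q.card : ℤ) * ((m:ℤ)-1) + (Qc.card : ℤ) * (m:ℤ)) ≤ 3 * (F3:ℤ) := by
        rw [hinner_card] at hSlb
        zify [hm1] at hSlb
        exact hSlb
      have hsumZ : ((m.choose 2 : ℕ) : ℤ) + ((Q.card : ℤ) + (Qc.card : ℤ))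
          = ((n.choose 2 : ℕ) : ℤ) := by
        rw [← hP2card, ← hIOcard, ← hQQc, ← hinner_card]
        push_cast
        ring
      have hImZ : 2 * ((m.choose 2 : ℕ) : ℤ) = (m:ℤ) * ((m:ℤ)-1) :=
        choose2_cast m (by omega)
      have hCtZ : 2 * (((t+1).choose 2 : ℕ) : ℤ) = ((t:ℤ)+1) * (t:ℤ) := by
        have h := choose2_cast (t+1) (by omega)
        push_cast at h ⊢
        linarith
      have hCnZ' : 2 * ((n.choose 2 : ℕ) : ℤ) = ((m:ℤ)+(t:ℤ)) * ((m:ℤ)+(t:ℤ)-1) := by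
        rw [hCnZ]
        have : (n:ℤ) = (m:ℤ) + (t:ℤ) := by exact_mod_cast (by omega : n = m + t)
        rw [this]
      have hgoalZ : ((m:ℤ)+(t:ℤ)-1) * ((m:ℤ)+(t:ℤ)-3) ≤ (F3:ℤ) :=
        caseB_arith (by exact_mod_cast ht2) (by exact_mod_cast (by omega : t + 1 ≤ m))
          hImZ hCnZ' hCtZ hsumZ (by exact_mod_cast hQcard) hSlbZ
      have hnmt : (n:ℤ) = (m:ℤ) + (t:ℤ) := by exact_mod_cast (by omega : n = m + t)
      have : (((n-1) * (n-3) : ℕ) : ℤ) ≤ (F3:ℤ) := by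
        calc (((n-1) * (n-3) : ℕ) : ℤ) = ((n:ℤ)-1) * ((n:ℤ)-3) := by
              push_cast [Nat.cast_sub (show 1 ≤ n by omega),
                Nat.cast_sub (show 3 ≤ n by omega)]
              ring
        _ = ((m:ℤ)+(t:ℤ)-1) * ((m:ℤ)+(t:ℤ)-3) := by rw [hnmt]
        _ ≤ (F3:ℤ) := hgoalZ
      exact_mod_cast this
end

section
/- There is a matroid M on the 6-element ground set {1,…,6} whose independent sets are exactly the subsets of cardinality at most 4 that contain none of the three sets {1,2,3,4}, {1,2,5,6}, {3,4,5,6}. This matroid M has rank 4, has no coloop, its distinct circuits are not pairwise disjoint (so M is not a complete intersection), for every element v the deletion M∖v has a coloop, and the h-vector of M is (1, 2, 3, 4, 2). -/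
set_option maxRecDepth 100000

def P' (S : Finset (Fin 6)) : Prop :=
  S.card ≤ 4 ∧ ¬(({0,1,2,3} : Finset (Fin 6)) ⊆ S) ∧
    ¬(({0,1,4,5} : Finset (Fin 6)) ⊆ S) ∧ ¬(({2,3,4,5} : Finset (Fin 6)) ⊆ S)

instance : DecidablePred P' := fun S => by unfold P'; infer_instance

theorem P'_empty : P' ∅ := by decide
theorem P'_subset : ∀ ⦃I J : Finset (Fin 6)⦄, P' J → I ⊆ J → P' I := by decide
theorem P'_aug : ∀ ⦃I J : Finset (Fin 6)⦄, P' I → P' J → I.card < J.card →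
    ∃ e ∈ J, e ∉ I ∧ P' (insert e I) := by decide

noncomputable def M6 : Matroid (Fin 6) :=
  (IndepMatroid.ofFinset Set.univ P' P'_empty P'_subset P'_aug
    (fun _ _ => by simp)).matroid

theorem M6_E : M6.E = Set.univ := rfl

theorem M6_indep_finset (S : Finset (Fin 6)) : M6.Indep ↑S ↔ P' S := by
  rw [M6]
  exact IndepMatroid.ofFinset_indep Set.univ P' P'_empty P'_subset P'_aug (fun _ _ => by simp)

theorem M6_indep (I : Set (Fin 6)) :
    M6.Indep I ↔ I.ncard ≤ 4 ∧
      ¬ (({0, 1, 2, 3} : Set (Fin 6)) ⊆ I) ∧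
      ¬ (({0, 1, 4, 5} : Set (Fin 6)) ⊆ I) ∧
      ¬ (({2, 3, 4, 5} : Set (Fin 6)) ⊆ I) := by
  obtain ⟨S, rfl⟩ : ∃ S : Finset (Fin 6), ↑S = I :=
    ⟨I.toFinite.toFinset, I.toFinite.coe_toFinset⟩
  rw [M6_indep_finset]
  unfold P'
  simp [← Finset.coe_subset]

theorem ncard_coe' (S : Finset (Fin 6)) : (↑S : Set (Fin 6)).ncard = S.card :=
  Set.ncard_coe_finset S

theorem M6_base_of (B : Set (Fin 6)) (h : M6.Indep B) (h4 : B.ncard = 4) :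
    M6.IsBase B := by
  rw [Matroid.isBase_iff_maximal_indep]
  refine ⟨h, fun I hI hBI => ?_⟩
  have h1 : I.ncard ≤ 4 := ((M6_indep I).1 hI).1
  exact (Set.eq_of_subset_of_ncard_le hBI (by omega) I.toFinite).symm.subset

theorem M6_indep_coe (S : Finset (Fin 6)) :
    M6.Indep ↑S ↔ S.card ≤ 4 ∧
      ¬(({0,1,2,3} : Finset (Fin 6)) ⊆ S) ∧
      ¬(({0,1,4,5} : Finset (Fin 6)) ⊆ S) ∧
      ¬(({2,3,4,5} : Finset (Fin 6)) ⊆ S) := by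
  rw [M6_indep]
  simp [← Finset.coe_subset]

theorem M6_base_finset (S : Finset (Fin 6))
    (h : S.card ≤ 4 ∧ ¬(({0,1,2,3} : Finset (Fin 6)) ⊆ S) ∧
      ¬(({0,1,4,5} : Finset (Fin 6)) ⊆ S) ∧ ¬(({2,3,4,5} : Finset (Fin 6)) ⊆ S))
    (h4 : S.card = 4) : M6.IsBase ↑S :=
  M6_base_of _ ((M6_indep_coe S).2 h) (by rw [ncard_coe', h4])

theorem exists_base4 : ∃ B, M6.IsBase B ∧ B.ncard = 4 :=
  ⟨↑({0,1,2,4} : Finset (Fin 6)), M6_base_finset _ (by decide) (by decide),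
    by rw [ncard_coe']; decide⟩

theorem no_coloop : ∀ e, ¬ IsColoopElem M6 e := by
  intro e he
  fin_cases e
  · exact absurd (he.2 _ (M6_base_finset {1,2,4,5} (by decide) (by decide))) (by simp)
  · exact absurd (he.2 _ (M6_base_finset {0,2,3,4} (by decide) (by decide))) (by simp)
  · exact absurd (he.2 _ (M6_base_finset {0,1,3,5} (by decide) (by decide))) (by simp)
  · exact absurd (he.2 _ (M6_base_finset {0,1,2,4} (by decide) (by decide))) (by simp)
  · exact absurd (he.2 _ (M6_base_finset {0,1,3,5} (by decide) (by decide))) (by simp)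
  · exact absurd (he.2 _ (M6_base_finset {0,1,2,4} (by decide) (by decide))) (by simp)

theorem circuit1 : IsCircuitSet M6 {0,1,2,3} := by
  refine ⟨by rw [M6_E]; exact Set.subset_univ _, ?_, ?_⟩
  · rw [M6_indep]; intro h; exact h.2.1 subset_rfl
  · intro D hD
    rw [M6_indep]
    have hsub := hD.subset
    refine ⟨le_trans (Set.ncard_le_ncard hsub (Set.toFinite _)) ?_, ?_, ?_, ?_⟩
    · rw [show ({0,1,2,3} : Set (Fin 6)) = ↑({0,1,2,3} : Finset (Fin 6)) by simp, ncard_coe']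
      decide
    · intro h; exact hD.ne (Set.Subset.antisymm hsub h)
    · intro h
      have : (4 : Fin 6) ∈ ({0,1,2,3} : Set (Fin 6)) := hsub (h (by simp))
      simp at this
    · intro h
      have : (4 : Fin 6) ∈ ({0,1,2,3} : Set (Fin 6)) := hsub (h (by simp))
      simp at this

theorem circuit2 : IsCircuitSet M6 {0,1,4,5} := by
  refine ⟨by rw [M6_E]; exact Set.subset_univ _, ?_, ?_⟩
  · rw [M6_indep]; intro h; exact h.2.2.1 subset_rfl
  · intro D hD
    rw [M6_indep]
    have hsub := hD.subset
    refine ⟨le_trans (Set.ncard_le_ncard hsub (Set.toFinite _)) ?_, ?_, ?_, ?_⟩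
    · rw [show ({0,1,4,5} : Set (Fin 6)) = ↑({0,1,4,5} : Finset (Fin 6)) by simp, ncard_coe']
      decide
    · intro h
      have : (2 : Fin 6) ∈ ({0,1,4,5} : Set (Fin 6)) := hsub (h (by simp))
      simp at this
    · intro h; exact hD.ne (Set.Subset.antisymm hsub h)
    · intro h
      have : (2 : Fin 6) ∈ ({0,1,4,5} : Set (Fin 6)) := hsub (h (by simp))
      simp at this

theorem circuits_meet : ∃ C₁ C₂, IsCircuitSet M6 C₁ ∧ IsCircuitSet M6 C₂ ∧ C₁ ≠ C₂ ∧
    ¬ Disjoint C₁ C₂ := by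
  refine ⟨{0,1,2,3}, {0,1,4,5}, circuit1, circuit2, ?_, ?_⟩
  · intro h
    have : (4 : Fin 6) ∈ ({0,1,2,3} : Set (Fin 6)) :=
      h ▸ (by simp : (4:Fin 6) ∈ ({0,1,4,5} : Set (Fin 6)))
    simp at this
  · intro h
    have := h.ne_of_mem (show (0:Fin 6) ∈ ({0,1,2,3} : Set (Fin 6)) by simp)
      (show (0:Fin 6) ∈ ({0,1,4,5} : Set (Fin 6)) by simp)
    exact this rfl

theorem del_coloop (v w : Fin 6) (Cv : Set (Fin 6)) (hwv : w ≠ v)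
    (hCdep : ¬ M6.Indep Cv)
    (hC4 : Cv.ncard = 4)
    (hcompl : ∀ x : Fin 6, x ≠ v → x ≠ w → x ∈ Cv)
    (hforb : ∀ F : Set (Fin 6),
      (F = {0,1,2,3} ∨ F = {0,1,4,5} ∨ F = {2,3,4,5}) → w ∈ F → v ∈ F) :
    ∃ e, IsColoopElem (M6.restrict (M6.E \ {v})) e := by
  refine ⟨w, ⟨by simp [M6_E, hwv], fun B hB => ?_⟩⟩
  by_contra hwB
  have hBi := hB.indep
  rw [Matroid.restrict_indep_iff] at hBi
  obtain ⟨hBind, hBR⟩ := hBi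
  have hvB : v ∉ B := fun hv => (hBR hv).2 rfl
  have hBC : B ⊆ Cv := fun x hx =>
    hcompl x (fun h => (hBR hx).2 h) (fun h => hwB (h ▸ hx))
  have hBssub : B ⊂ Cv := ⟨hBC, fun h => hCdep (by rwa [Set.Subset.antisymm hBC h] at hBind)⟩
  have hB3 : B.ncard ≤ 3 := by
    have := Set.ncard_lt_ncard hBssub (Set.toFinite Cv)
    omega
  obtain ⟨-, n1, n2, n3⟩ := (M6_indep B).1 hBind
  have key : ∀ F : Set (Fin 6),
      (F = {0,1,2,3} ∨ F = {0,1,4,5} ∨ F = {2,3,4,5}) → ¬ F ⊆ insert w B := by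
    intro F hF hsub
    by_cases hwF : w ∈ F
    · have hvF := hforb F hF hwF
      rcases hsub hvF with h | h
      · exact hwv h.symm
      · exact hvB h
    · have hFB : F ⊆ B := by
        intro x hx
        rcases hsub hx with h | h
        · exact absurd (h ▸ hx) hwF
        · exact h
      rcases hF with rfl | rfl | rfl
      · exact n1 hFB
      · exact n2 hFB
      · exact n3 hFB
  have hins : M6.Indep (insert w B) := by
    rw [M6_indep]
    refine ⟨le_trans (Set.ncard_insert_le w B) (by omega),
      key _ (Or.inl rfl), key _ (Or.inr (Or.inl rfl)), key _ (Or.inr (Or.inr rfl))⟩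
  have hinsR : insert w B ⊆ M6.E \ {v} := by
    intro x hx
    rcases hx with rfl | h
    · simp [M6_E, hwv]
    · exact hBR h
  have := hB.eq_of_subset_indep (Matroid.restrict_indep_iff.2 ⟨hins, hinsR⟩)
    (Set.subset_insert w B)
  exact hwB (this ▸ Set.mem_insert w B)

theorem del_coloop_all : ∀ v : Fin 6, ∃ e, IsColoopElem (M6.restrict (M6.E \ {v})) e := by
  have hdep : ∀ F : Set (Fin 6),
      (F = {0,1,2,3} ∨ F = {0,1,4,5} ∨ F = {2,3,4,5}) → ¬ M6.Indep F := by
    intro F hF h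
    rw [M6_indep] at h
    rcases hF with rfl | rfl | rfl
    · exact h.2.1 subset_rfl
    · exact h.2.2.1 subset_rfl
    · exact h.2.2.2 subset_rfl
  have h4 : ∀ F : Set (Fin 6),
      (F = {0,1,2,3} ∨ F = {0,1,4,5} ∨ F = {2,3,4,5}) → F.ncard = 4 := by
    intro F hF
    rcases hF with rfl | rfl | rfl
    · rw [show ({0,1,2,3} : Set (Fin 6)) = ↑({0,1,2,3} : Finset (Fin 6)) by simp,
        Set.ncard_coe_finset]; decide
    · rw [show ({0,1,4,5} : Set (Fin 6)) = ↑({0,1,4,5} : Finset (Fin 6)) by simp,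
        Set.ncard_coe_finset]; decide
    · rw [show ({2,3,4,5} : Set (Fin 6)) = ↑({2,3,4,5} : Finset (Fin 6)) by simp,
        Set.ncard_coe_finset]; decide
  intro v
  fin_cases v
  · exact del_coloop 0 1 {2,3,4,5} (by decide) (hdep _ (by tauto)) (h4 _ (by tauto))
      (by intro x; simp only [Set.mem_insert_iff, Set.mem_singleton_iff]; revert x; decide)
      (by rintro F (rfl | rfl | rfl) <;> simp only [Set.mem_insert_iff, Set.mem_singleton_iff] <;> decide)
  · exact del_coloop 1 0 {2,3,4,5} (by decide) (hdep _ (by tauto)) (h4 _ (by tauto))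
      (by intro x; simp only [Set.mem_insert_iff, Set.mem_singleton_iff]; revert x; decide)
      (by rintro F (rfl | rfl | rfl) <;> simp only [Set.mem_insert_iff, Set.mem_singleton_iff] <;> decide)
  · exact del_coloop 2 3 {0,1,4,5} (by decide) (hdep _ (by tauto)) (h4 _ (by tauto))
      (by intro x; simp only [Set.mem_insert_iff, Set.mem_singleton_iff]; revert x; decide)
      (by rintro F (rfl | rfl | rfl) <;> simp only [Set.mem_insert_iff, Set.mem_singleton_iff] <;> decide)
  · exact del_coloop 3 2 {0,1,4,5} (by decide) (hdep _ (by tauto)) (h4 _ (by tauto))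
      (by intro x; simp only [Set.mem_insert_iff, Set.mem_singleton_iff]; revert x; decide)
      (by rintro F (rfl | rfl | rfl) <;> simp only [Set.mem_insert_iff, Set.mem_singleton_iff] <;> decide)
  · exact del_coloop 4 5 {0,1,2,3} (by decide) (hdep _ (by tauto)) (h4 _ (by tauto))
      (by intro x; simp only [Set.mem_insert_iff, Set.mem_singleton_iff]; revert x; decide)
      (by rintro F (rfl | rfl | rfl) <;> simp only [Set.mem_insert_iff, Set.mem_singleton_iff] <;> decide)
  · exact del_coloop 5 4 {0,1,2,3} (by decide) (hdep _ (by tauto)) (h4 _ (by tauto))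
      (by intro x; simp only [Set.mem_insert_iff, Set.mem_singleton_iff]; revert x; decide)
      (by rintro F (rfl | rfl | rfl) <;> simp only [Set.mem_insert_iff, Set.mem_singleton_iff] <;> decide)

theorem F_eq (i : ℕ) :
    matroidF M6 i = (Finset.univ.filter fun S : Finset (Fin 6) => P' S ∧ S.card = i).card := by
  have himg : {I : Set (Fin 6) | M6.Indep I ∧ I.ncard = i} =
      ((↑) : Finset (Fin 6) → Set (Fin 6)) '' {S : Finset (Fin 6) | P' S ∧ S.card = i} := by
    ext I
    simp only [Set.mem_setOf_eq, Set.mem_image]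
    constructor
    · rintro ⟨h1, h2⟩
      refine ⟨I.toFinite.toFinset, ⟨?_, ?_⟩, I.toFinite.coe_toFinset⟩
      · rw [← M6_indep_finset, I.toFinite.coe_toFinset]; exact h1
      · rw [← Set.ncard_coe_finset, I.toFinite.coe_toFinset]; exact h2
    · rintro ⟨S, ⟨h1, h2⟩, rfl⟩
      exact ⟨(M6_indep_finset S).2 h1, by rw [Set.ncard_coe_finset]; exact h2⟩
  rw [matroidF, himg, Set.ncard_image_of_injective _ Finset.coe_injective,
    Set.ncard_eq_toFinset_card', Set.toFinset_setOf]

theorem F0 : matroidF M6 0 = 1 := by rw [F_eq]; decide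
theorem F1 : matroidF M6 1 = 6 := by rw [F_eq]; decide
theorem F2 : matroidF M6 2 = 15 := by rw [F_eq]; decide
theorem F3 : matroidF M6 3 = 20 := by rw [F_eq]; decide
theorem F4 : matroidF M6 4 = 12 := by rw [F_eq]; decide
theorem Fbig (i : ℕ) (h : 5 ≤ i) : matroidF M6 i = 0 := by
  rw [F_eq]
  convert Finset.card_empty
  rw [Finset.filter_eq_empty_iff]
  rintro S - ⟨h1, h2⟩
  have := h1.1
  omega

theorem H_eq : ∀ j, matroidH M6 4 j = (([1, 2, 3, 4, 2] : List ℕ).getD j 0 : ℤ) := by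
  intro j
  match j with
  | 0 => simp [matroidH, F0]
  | 1 => rw [matroidH]; simp [Finset.sum_range_succ, F0, F1]
  | 2 => rw [matroidH]; simp [Finset.sum_range_succ, F0, F1, F2]; decide
  | 3 => rw [matroidH]; simp [Finset.sum_range_succ, F0, F1, F2, F3]
  | 4 => rw [matroidH]; simp [Finset.sum_range_succ, F0, F1, F2, F3, F4]
  | (n+5) =>
    rw [matroidH, List.getD_eq_default _ _ (by simp)]
    rw [Finset.sum_eq_zero]
    · simp
    intro i hi
    rcases le_or_gt i 4 with h | h
    · rw [Nat.choose_eq_zero_of_lt (by omega)]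
      ring
    · rw [Fbig i (by omega)]
      ring


/-- There is a matroid `M` on a 6-element ground set whose independent sets are
exactly the subsets of cardinality at most 4 containing none of the three sets
`{1,2,3,4}`, `{1,2,5,6}`, `{3,4,5,6}`. This matroid has rank 4, has no coloop, its
distinct circuits are not pairwise disjoint (it is not a complete intersection),
every single-element deletion has a coloop, and its h-vector is `(1,2,3,4,2)`. -/
theorem exists_special_rank_four_matroid :
    ∃ M : Matroid (Fin 6),
      M.E = Set.univ ∧
      (∀ I : Set (Fin 6), M.Indep I ↔ I.ncard ≤ 4 ∧
        ¬ (({0, 1, 2, 3} : Set (Fin 6)) ⊆ I) ∧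
        ¬ (({0, 1, 4, 5} : Set (Fin 6)) ⊆ I) ∧
        ¬ (({2, 3, 4, 5} : Set (Fin 6)) ⊆ I)) ∧
      (∃ B, M.IsBase B ∧ B.ncard = 4) ∧
      (∀ e, ¬ IsColoopElem M e) ∧
      (∃ C₁ C₂, IsCircuitSet M C₁ ∧ IsCircuitSet M C₂ ∧ C₁ ≠ C₂ ∧ ¬ Disjoint C₁ C₂) ∧
      (∀ v : Fin 6, ∃ e, IsColoopElem (M.restrict (M.E \ {v})) e) ∧
      (∀ j, matroidH M 4 j = (([1, 2, 3, 4, 2] : List ℕ).getD j 0 : ℤ)) :=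
  ⟨M6, M6_E, M6_indep, exists_base4, no_coloop, circuits_meet, del_coloop_all, H_eq⟩
end

section
/- Let (1, r−1, a, b) and (1, r', c) be pure O-sequences with 1 ≤ r' ≤ r−1. Then there exists an integer a_1 ≥ a + r' such that (1, r, a_1, b+c) is a pure O-sequence. -/
section Helpers


section MonDeg
variable {r : ℕ}

lemma monDeg_eq_sum (m : Fin r →₀ ℕ) : monDeg m = ∑ i, m i := by
  rw [monDeg, Finsupp.sum]
  exact Finset.sum_subset (Finset.subset_univ _) fun i _ hi => Finsupp.notMem_support_iff.mp hi

lemma monDeg_zero : monDeg (0 : Fin r →₀ ℕ) = 0 := by simp [monDeg_eq_sum]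

lemma monDeg_add (m n : Fin r →₀ ℕ) : monDeg (m + n) = monDeg m + monDeg n := by
  simp [monDeg_eq_sum, Finset.sum_add_distrib]

lemma monDeg_single (j : Fin r) (v : ℕ) : monDeg (Finsupp.single j v) = v := by
  simp [monDeg_eq_sum, Finsupp.single_apply]

lemma monDeg_eq_zero_iff (m : Fin r →₀ ℕ) : monDeg m = 0 ↔ m = 0 := by
  rw [monDeg_eq_sum]
  constructor
  · intro h
    ext i
    exact (Finset.sum_eq_zero_iff.mp h) i (Finset.mem_univ i)
  · rintro rfl; simp

lemma monDeg_mono {m n : Fin r →₀ ℕ} (h : m ≤ n) : monDeg m ≤ monDeg n := by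
  rw [monDeg_eq_sum, monDeg_eq_sum]
  exact Finset.sum_le_sum fun i _ => Finsupp.le_def.mp h i

lemma monDeg_lt {m n : Fin r →₀ ℕ} (h : m ≤ n) (hne : m ≠ n) : monDeg m < monDeg n := by
  rw [monDeg_eq_sum, monDeg_eq_sum]
  refine Finset.sum_lt_sum (fun i _ => Finsupp.le_def.mp h i) ?_
  by_contra hc
  push_neg at hc
  exact hne (Finsupp.ext fun i => le_antisymm (Finsupp.le_def.mp h i) (hc i (Finset.mem_univ i)))

lemma eq_single_of_monDeg_one {m : Fin r →₀ ℕ} (h : monDeg m = 1) :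
    ∃ j, m = Finsupp.single j 1 := by
  have hne : m ≠ 0 := by
    intro h0; rw [h0, monDeg_zero] at h; exact one_ne_zero h.symm
  obtain ⟨j, hj⟩ := Finsupp.support_nonempty_iff.mpr hne
  refine ⟨j, ?_⟩
  have hle : Finsupp.single j 1 ≤ m :=
    Finsupp.single_le_iff.mpr (Nat.one_le_iff_ne_zero.mpr (Finsupp.mem_support_iff.mp hj))
  by_contra hne2
  have := monDeg_lt hle (fun hh => hne2 hh.symm)
  rw [monDeg_single, h] at this
  exact lt_irrefl 1 this

end MonDeg

section Phi
variable {p q : ℕ} (g : Fin p → Fin q) (S : Finset (Fin p))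

/-- Relabeling map on monomials. -/
noncomputable def phi (N : Fin p →₀ ℕ) : Fin q →₀ ℕ := ∑ i ∈ S, Finsupp.single (g i) (N i)

lemma phi_apply_mem (hg : Set.InjOn g S) {i : Fin p} (hi : i ∈ S) (N : Fin p →₀ ℕ) :
    phi g S N (g i) = N i := by
  rw [phi, Finsupp.finset_sum_apply, Finset.sum_eq_single i]
  · simp
  · intro i' hi' hne
    rw [Finsupp.single_apply, if_neg]
    intro h
    exact hne (hg hi' hi h)
  · intro h; exact absurd hi h

lemma phi_apply_not_mem {j : Fin q} (hj : ∀ i ∈ S, g i ≠ j) (N : Fin p →₀ ℕ) :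
    phi g S N j = 0 := by
  rw [phi, Finsupp.finset_sum_apply]
  refine Finset.sum_eq_zero fun i hi => ?_
  rw [Finsupp.single_apply, if_neg (hj i hi)]

lemma phi_single {i : Fin p} (hi : i ∈ S) (v : ℕ) :
    phi g S (Finsupp.single i v) = Finsupp.single (g i) v := by
  rw [phi, Finset.sum_eq_single i]
  · simp
  · intro i' _ hne
    rw [Finsupp.single_apply, if_neg (Ne.symm hne), Finsupp.single_zero]
  · intro h; exact absurd hi h

lemma phi_zero : phi g S (0 : Fin p →₀ ℕ) = 0 := by simp [phi]

lemma monDeg_phi {N : Fin p →₀ ℕ} (hN : N.support ⊆ S) : monDeg (phi g S N) = monDeg N := by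
  rw [monDeg_eq_sum, monDeg_eq_sum]
  have : ∀ j, phi g S N j = ∑ i ∈ S, Finsupp.single (g i) (N i) j := by
    intro j; rw [phi, Finsupp.finset_sum_apply]
  simp only [this]
  rw [Finset.sum_comm]
  have hterm : ∀ i ∈ S, (∑ j, Finsupp.single (g i) (N i) j) = N i := by
    intro i _
    rw [← monDeg_eq_sum, monDeg_single]
  rw [Finset.sum_congr rfl hterm]
  refine Finset.sum_subset (Finset.subset_univ S) fun i _ hi => ?_
  exact Finsupp.notMem_support_iff.mp fun hc => hi (hN hc)

lemma phi_mono {N M : Fin p →₀ ℕ} (h : N ≤ M) : phi g S N ≤ phi g S M := by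
  rw [Finsupp.le_def]
  intro j
  rw [phi, phi, Finsupp.finset_sum_apply, Finsupp.finset_sum_apply]
  refine Finset.sum_le_sum fun i _ => ?_
  rw [Finsupp.single_apply, Finsupp.single_apply]
  split
  · exact Finsupp.le_def.mp h i
  · exact le_rfl

lemma phi_le_rev (hg : Set.InjOn g S) {N M : Fin p →₀ ℕ} (hN : N.support ⊆ S)
    (h : phi g S N ≤ phi g S M) : N ≤ M := by
  rw [Finsupp.le_def]
  intro i
  by_cases hi : i ∈ S
  · have := Finsupp.le_def.mp h (g i)
    rwa [phi_apply_mem g S hg hi, phi_apply_mem g S hg hi] at this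
  · have : N i = 0 := Finsupp.notMem_support_iff.mp fun hc => hi (hN hc)
    omega

lemma phi_inj (hg : Set.InjOn g S) {N M : Fin p →₀ ℕ} (hN : N.support ⊆ S)
    (hM : M.support ⊆ S) (h : phi g S N = phi g S M) : N = M :=
  le_antisymm (phi_le_rev g S hg hN h.le) (phi_le_rev g S hg hM h.ge)

lemma phi_lift (hg : Set.InjOn g S) {M : Fin p →₀ ℕ} (hM : M.support ⊆ S)
    {n : Fin q →₀ ℕ} (hn : n ≤ phi g S M) :
    ∃ n₀ : Fin p →₀ ℕ, n₀.support ⊆ S ∧ n₀ ≤ M ∧ n = phi g S n₀ := by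
  set n₀ : Fin p →₀ ℕ := ∑ i ∈ S, Finsupp.single i (n (g i)) with hn₀
  have happ : ∀ i, n₀ i = if i ∈ S then n (g i) else 0 := by
    intro i
    rw [hn₀, Finsupp.finset_sum_apply]
    split
    · rename_i hi
      rw [Finset.sum_eq_single i]
      · simp
      · intro i' _ hne
        rw [Finsupp.single_apply, if_neg hne]
      · intro h; exact absurd hi h
    · rename_i hi
      refine Finset.sum_eq_zero fun i' hi' => ?_
      rw [Finsupp.single_apply, if_neg]
      intro h; exact hi (h ▸ hi')
  have hsupp : n₀.support ⊆ S := by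
    intro i hi
    rw [Finsupp.mem_support_iff, happ] at hi
    by_contra hc
    rw [if_neg hc] at hi
    exact hi rfl
  refine ⟨n₀, hsupp, ?_, ?_⟩
  · rw [Finsupp.le_def]
    intro i
    rw [happ]
    split
    · rename_i hi
      have := Finsupp.le_def.mp hn (g i)
      rwa [phi_apply_mem g S hg hi] at this
    · exact Nat.zero_le _
  · ext j
    by_cases hj : ∃ i ∈ S, g i = j
    · obtain ⟨i, hi, rfl⟩ := hj
      rw [phi_apply_mem g S hg hi, happ, if_pos hi]
    · push_neg at hj
      rw [phi_apply_not_mem g S hj]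
      have := Finsupp.le_def.mp hn j
      rw [phi_apply_not_mem g S hj] at this
      omega

end Phi



section Vars
variable {p : ℕ}

noncomputable def varsOf (X : Finset (Fin p →₀ ℕ)) : Finset (Fin p) :=
  X.biUnion Finsupp.support

lemma support_subset_varsOf {X : Finset (Fin p →₀ ℕ)} {m : Fin p →₀ ℕ} (hm : m ∈ X) :
    m.support ⊆ varsOf X :=
  Finset.subset_biUnion_of_mem _ hm

lemma single_mem_of_mem_varsOf {X : Finset (Fin p →₀ ℕ)} (hoi : IsOrderIdeal X) {j : Fin p}
    (hj : j ∈ varsOf X) : Finsupp.single j 1 ∈ X := by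
  rw [varsOf, Finset.mem_biUnion] at hj
  obtain ⟨m, hm, hjm⟩ := hj
  exact hoi.2 m hm _
    (Finsupp.single_le_iff.mpr (Nat.one_le_iff_ne_zero.mpr (Finsupp.mem_support_iff.mp hjm)))

lemma filter_deg_one_eq {X : Finset (Fin p →₀ ℕ)} (hoi : IsOrderIdeal X) :
    X.filter (fun m => monDeg m = 1) = (varsOf X).image (fun j => Finsupp.single j 1) := by
  ext m
  simp only [Finset.mem_filter, Finset.mem_image]
  constructor
  · rintro ⟨hm, hdeg⟩
    obtain ⟨j, rfl⟩ := eq_single_of_monDeg_one hdeg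
    refine ⟨j, ?_, rfl⟩
    apply support_subset_varsOf hm
    rw [Finsupp.support_single_ne_zero _ one_ne_zero]
    exact Finset.mem_singleton_self j
  · rintro ⟨j, hj, rfl⟩
    exact ⟨single_mem_of_mem_varsOf hoi hj, monDeg_single j 1⟩

lemma degCount_one_eq_card_varsOf {X : Finset (Fin p →₀ ℕ)} (hoi : IsOrderIdeal X) :
    degCount X 1 = (varsOf X).card := by
  rw [degCount, filter_deg_one_eq hoi]
  exact Finset.card_image_of_injective _ (Finsupp.single_left_injective one_ne_zero)

lemma maximal_monDeg {X : Finset (Fin p →₀ ℕ)} (hpure : IsPureSet X) {e : ℕ}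
    (htop : degCount X e ≠ 0) (hbd : ∀ m ∈ X, monDeg m ≤ e) :
    ∀ m ∈ X, (∀ n ∈ X, m ≤ n → n = m) → monDeg m = e := by
  intro m hm hmax
  obtain ⟨m₀, hm₀⟩ := Finset.card_pos.mp (Nat.pos_of_ne_zero htop)
  rw [Finset.mem_filter] at hm₀
  have hmax₀ : ∀ n ∈ X, m₀ ≤ n → n = m₀ := by
    intro n hn hle
    by_contra hne
    have := monDeg_lt hle (fun h => hne h.symm)
    have := hbd n hn
    omega
  rw [hpure m hm m₀ hm₀.1 hmax hmax₀, hm₀.2]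

lemma zero_mem_of_orderIdeal {X : Finset (Fin p →₀ ℕ)} (hoi : IsOrderIdeal X) :
    (0 : Fin p →₀ ℕ) ∈ X := by
  obtain ⟨m, hm⟩ := hoi.1
  exact hoi.2 m hm 0 zero_le

end Vars

end Helpers

/-- If `(1, r-1, a, b)` and `(1, r', c)` are pure O-sequences with `1 ≤ r' ≤ r-1`,
then there is an integer `a₁ ≥ a + r'` such that `(1, r, a₁, b + c)` is a pure
O-sequence. -/
theorem exists_pure_shifted (r a b r' c : ℕ)
    (H : IsPureOSequence [1, r - 1, a, b]) (H' : IsPureOSequence [1, r', c])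
    (hr'1 : 1 ≤ r') (hr' : r' ≤ r - 1) :
    ∃ a1 : ℕ, a + r' ≤ a1 ∧ IsPureOSequence [1, r, a1, b + c] := by
  classical
  obtain ⟨p, X, hXoi, hXpure, hXne, hXget, hXtop⟩ := H
  obtain ⟨q, Y, hYoi, hYpure, hYne, hYget, hYtop⟩ := H'
  -- basic degree counts
  have hX1 : degCount X 1 = r - 1 := by simpa [List.getD] using hXget 1
  have hX2 : degCount X 2 = a := by simpa [List.getD] using hXget 2
  have hX3 : degCount X 3 = b := by simpa [List.getD] using hXget 3
  have hXhi : ∀ i, 4 ≤ i → degCount X i = 0 := by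
    intro i hi
    rw [hXget i, List.getD_eq_default]
    simpa using hi
  have hb : b ≠ 0 := by
    have := hXtop
    simp only [List.length] at this
    rwa [show (4 : ℕ) - 1 = 3 from rfl, hX3] at this
  have hY1 : degCount Y 1 = r' := by simpa [List.getD] using hYget 1
  have hY2 : degCount Y 2 = c := by simpa [List.getD] using hYget 2
  have hYhi : ∀ i, 3 ≤ i → degCount Y i = 0 := by
    intro i hi
    rw [hYget i, List.getD_eq_default]
    simpa using hi
  have hc : c ≠ 0 := by
    have := hYtop
    simp only [List.length] at this
    rwa [show (3 : ℕ) - 1 = 2 from rfl, hY2] at this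
  -- degree bounds
  have hXdeg : ∀ m ∈ X, monDeg m ≤ 3 := by
    intro m hm
    by_contra hgt
    have h4 : 4 ≤ monDeg m := by omega
    have : degCount X (monDeg m) = 0 := hXhi _ h4
    rw [degCount, Finset.card_eq_zero] at this
    have : m ∈ (∅ : Finset (Fin p →₀ ℕ)) := this ▸ Finset.mem_filter.mpr ⟨hm, rfl⟩
    simp at this
  have hYdeg : ∀ m ∈ Y, monDeg m ≤ 2 := by
    intro m hm
    by_contra hgt
    have h3 : 3 ≤ monDeg m := by omega
    have : degCount Y (monDeg m) = 0 := hYhi _ h3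
    rw [degCount, Finset.card_eq_zero] at this
    have : m ∈ (∅ : Finset (Fin q →₀ ℕ)) := this ▸ Finset.mem_filter.mpr ⟨hm, rfl⟩
    simp at this
  have hXmax : ∀ m ∈ X, (∀ n ∈ X, m ≤ n → n = m) → monDeg m = 3 :=
    maximal_monDeg hXpure (hX3 ▸ hb) hXdeg
  have hYmax : ∀ m ∈ Y, (∀ n ∈ Y, m ≤ n → n = m) → monDeg m = 2 :=
    maximal_monDeg hYpure (hY2 ▸ hc) hYdeg
  -- variable sets
  set SX := varsOf X with hSX
  set SY := varsOf Y with hSYdef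
  have hSXcard : SX.card = r - 1 := by rw [← degCount_one_eq_card_varsOf hXoi, hX1]
  have hSYcard : SY.card = r' := by rw [← degCount_one_eq_card_varsOf hYoi, hY1]
  have hcard : SY.card ≤ SX.card := by rw [hSXcard, hSYcard]; exact hr'
  have hYsupp : ∀ y ∈ Y, y.support ⊆ SY := fun y hy => support_subset_varsOf hy
  -- the relabeling map for Y
  set g : Fin q → Fin (p + 1) := fun i =>
    if h : i ∈ SY then
      Fin.castSucc ((SX.equivFin.symm (Fin.castLE hcard (SY.equivFin ⟨i, h⟩))) : Fin p)
    else 0 with hgdef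
  have hg_mem : ∀ i ∈ SY, ∃ j ∈ SX, g i = Fin.castSucc j := by
    intro i hi
    refine ⟨_, (SX.equivFin.symm (Fin.castLE hcard (SY.equivFin ⟨i, hi⟩))).2, ?_⟩
    simp [hgdef, dif_pos hi]
  have hg_inj : Set.InjOn g SY := by
    intro i₁ h₁ i₂ h₂ heq
    have h₁' : i₁ ∈ SY := h₁
    have h₂' : i₂ ∈ SY := h₂
    rw [hgdef] at heq
    simp only [dif_pos h₁', dif_pos h₂'] at heq
    have h3 := Fin.castSucc_injective p heq
    have h4 := Subtype.coe_injective h3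
    have h5 := SX.equivFin.symm.injective h4
    have h6 := Fin.castLE_injective hcard h5
    have h7 := SY.equivFin.injective h6
    exact congrArg Subtype.val h7
  have hg_ne_last : ∀ i ∈ SY, g i ≠ Fin.last p := by
    intro i hi
    obtain ⟨j, _, hj⟩ := hg_mem i hi
    rw [hj]
    exact (Fin.castSucc_lt_last j).ne
  -- the two embeddings and the extra variable
  set phiX : (Fin p →₀ ℕ) → (Fin (p + 1) →₀ ℕ) := phi Fin.castSucc Finset.univ with hphiX
  set phiY : (Fin q →₀ ℕ) → (Fin (p + 1) →₀ ℕ) := phi g SY with hphiY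
  set t : Fin (p + 1) →₀ ℕ := Finsupp.single (Fin.last p) 1 with ht
  have hcsInj : Set.InjOn (Fin.castSucc : Fin p → Fin (p + 1)) (Finset.univ : Finset (Fin p)) :=
    (Fin.castSucc_injective p).injOn
  have hXs : ∀ m : Fin p →₀ ℕ, m.support ⊆ Finset.univ := fun m => Finset.subset_univ _
  have hlastX : ∀ x : Fin p →₀ ℕ, phiX x (Fin.last p) = 0 := by
    intro x
    exact phi_apply_not_mem _ _ (fun i _ => (Fin.castSucc_lt_last i).ne) x
  have hlastY : ∀ y : Fin q →₀ ℕ, phiY y (Fin.last p) = 0 := by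
    intro y
    exact phi_apply_not_mem _ _ hg_ne_last y
  have hlastC : ∀ y : Fin q →₀ ℕ, (t + phiY y) (Fin.last p) = 1 := by
    intro y
    rw [Finsupp.add_apply, hlastY, ht, Finsupp.single_eq_same]
  have hdegC : ∀ y : Fin q →₀ ℕ, monDeg (t + phiY y) = 1 + monDeg (phi g SY y) := by
    intro y
    rw [monDeg_add, ht, monDeg_single]
  -- the new order ideal
  set X' : Finset (Fin (p + 1) →₀ ℕ) :=
    X.image phiX ∪ Y.image phiY ∪ Y.image (fun y => t + phiY y) with hX'
  have mem_X' : ∀ m, m ∈ X' ↔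
      (∃ x ∈ X, phiX x = m) ∨ (∃ y ∈ Y, phiY y = m) ∨ (∃ y ∈ Y, t + phiY y = m) := by
    intro m
    simp [hX', Finset.mem_union, Finset.mem_image, or_assoc]
  have h0X : (0 : Fin p →₀ ℕ) ∈ X := zero_mem_of_orderIdeal hXoi
  have h0Y : (0 : Fin q →₀ ℕ) ∈ Y := zero_mem_of_orderIdeal hYoi
  have h0X' : (0 : Fin (p + 1) →₀ ℕ) ∈ X' := by
    rw [mem_X']
    exact Or.inl ⟨0, h0X, phi_zero _ _⟩
  -- X' is an order ideal
  have hX'oi : IsOrderIdeal X' := by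
    constructor
    · exact ⟨0, h0X'⟩
    · intro m hm n hle
      rw [mem_X'] at hm
      rcases hm with ⟨x, hx, rfl⟩ | ⟨y, hy, rfl⟩ | ⟨y, hy, rfl⟩
      · obtain ⟨n₀, _, hle₀, rfl⟩ := phi_lift _ _ hcsInj (hXs x) hle
        rw [mem_X']
        exact Or.inl ⟨n₀, hXoi.2 x hx n₀ hle₀, rfl⟩
      · obtain ⟨n₀, _, hle₀, rfl⟩ := phi_lift _ _ hg_inj (hYsupp y hy) hle
        rw [mem_X']
        exact Or.inr (Or.inl ⟨n₀, hYoi.2 y hy n₀ hle₀, rfl⟩)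
      · -- divisor of t + phiY y
        have hn'le : n.erase (Fin.last p) ≤ phiY y := by
          rw [Finsupp.le_def]
          intro j
          by_cases hj : j = Fin.last p
          · rw [hj, Finsupp.erase_same]
            exact Nat.zero_le _
          · rw [Finsupp.erase_ne hj]
            have := Finsupp.le_def.mp hle j
            rw [Finsupp.add_apply, ht, Finsupp.single_apply, if_neg (fun h => hj h.symm),
              zero_add] at this
            exact this
        obtain ⟨n₀, _, hle₀, hn₀⟩ := phi_lift _ _ hg_inj (hYsupp y hy) hn'le
        have hn₀Y : n₀ ∈ Y := hYoi.2 y hy n₀ hle₀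
        have hnlast : n (Fin.last p) ≤ 1 := by
          have := Finsupp.le_def.mp hle (Fin.last p)
          rwa [hlastC y] at this
        have hsplit : Finsupp.single (Fin.last p) (n (Fin.last p)) + n.erase (Fin.last p) = n :=
          Finsupp.single_add_erase _ n
        rw [mem_X']
        interval_cases hv : n (Fin.last p)
        · rw [Finsupp.single_zero, zero_add] at hsplit
          exact Or.inr (Or.inl ⟨n₀, hn₀Y, by rw [hphiY, ← hn₀]; exact hsplit⟩)
        · exact Or.inr (Or.inr ⟨n₀, hn₀Y, by rw [hphiY, ← hn₀, ht]; exact hsplit⟩)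
  -- all maximal elements of X' have degree 3
  have hX'max : ∀ m ∈ X', (∀ n ∈ X', m ≤ n → n = m) → monDeg m = 3 := by
    intro m hm hmax
    rw [mem_X'] at hm
    rcases hm with ⟨x, hx, rfl⟩ | ⟨y, hy, rfl⟩ | ⟨y, hy, rfl⟩
    · have hxmax : ∀ n ∈ X, x ≤ n → n = x := by
        intro n hn hle
        have h1 : phiX n ∈ X' := by rw [mem_X']; exact Or.inl ⟨n, hn, rfl⟩
        have h2 := hmax (phiX n) h1 (phi_mono _ _ hle)
        exact phi_inj _ _ hcsInj (hXs n) (hXs x) h2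
      rw [hphiX, monDeg_phi _ _ (hXs x)]
      exact hXmax x hx hxmax
    · exfalso
      have h1 : t + phiY y ∈ X' := by rw [mem_X']; exact Or.inr (Or.inr ⟨y, hy, rfl⟩)
      have h2 := hmax (t + phiY y) h1 (self_le_add_left _ _)
      have h3 : (t + phiY y) (Fin.last p) = (phiY y) (Fin.last p) := by rw [h2]
      rw [hlastC y, hlastY y] at h3
      exact one_ne_zero h3
    · have hymax : ∀ n ∈ Y, y ≤ n → n = y := by
        intro n hn hle
        have h1 : t + phiY n ∈ X' := by rw [mem_X']; exact Or.inr (Or.inr ⟨n, hn, rfl⟩)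
        have h2 := hmax (t + phiY n) h1 (add_le_add_right (phi_mono _ _ hle) t)
        have h3 := add_left_cancel h2
        exact phi_inj _ _ hg_inj (hYsupp n hn) (hYsupp y hy) h3
      rw [hdegC, monDeg_phi _ _ (hYsupp y hy)]
      rw [hYmax y hy hymax]
  have hX'pure : IsPureSet X' := by
    intro m hm n hn hmaxm hmaxn
    rw [hX'max m hm hmaxm, hX'max n hn hmaxn]
  -- degree bound for X'
  have hX'deg : ∀ m ∈ X', monDeg m ≤ 3 := by
    intro m hm
    rw [mem_X'] at hm
    rcases hm with ⟨x, hx, rfl⟩ | ⟨y, hy, rfl⟩ | ⟨y, hy, rfl⟩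
    · rw [hphiX, monDeg_phi _ _ (hXs x)]; exact hXdeg x hx
    · rw [hphiY, monDeg_phi _ _ (hYsupp y hy)]
      exact le_trans (hYdeg y hy) (by omega)
    · rw [hdegC, monDeg_phi _ _ (hYsupp y hy)]
      have := hYdeg y hy
      omega
  -- degree counts of X'
  have c0 : degCount X' 0 = 1 := by
    rw [degCount]
    have : X'.filter (fun m => monDeg m = 0) = {0} := by
      ext m
      simp only [Finset.mem_filter, Finset.mem_singleton]
      constructor
      · rintro ⟨_, hd⟩
        exact (monDeg_eq_zero_iff m).mp hd
      · rintro rfl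
        exact ⟨h0X', monDeg_zero⟩
    rw [this, Finset.card_singleton]
  -- filter in degree 1
  have c1 : degCount X' 1 = r := by
    have hfil : X'.filter (fun m => monDeg m = 1) =
        insert t ((X.filter (fun m => monDeg m = 1)).image phiX) := by
      ext m
      simp only [Finset.mem_filter, Finset.mem_insert, Finset.mem_image]
      constructor
      · rintro ⟨hm, hd⟩
        rw [mem_X'] at hm
        rcases hm with ⟨x, hx, rfl⟩ | ⟨y, hy, rfl⟩ | ⟨y, hy, rfl⟩
        · rw [hphiX, monDeg_phi _ _ (hXs x)] at hd
          exact Or.inr ⟨x, ⟨hx, hd⟩, rfl⟩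
        · rw [hphiY, monDeg_phi _ _ (hYsupp y hy)] at hd
          obtain ⟨i, rfl⟩ := eq_single_of_monDeg_one hd
          have hiSY : i ∈ SY := by
            apply hYsupp _ hy
            rw [Finsupp.support_single_ne_zero _ one_ne_zero]
            exact Finset.mem_singleton_self i
          obtain ⟨j, hjSX, hgj⟩ := hg_mem i hiSY
          refine Or.inr ⟨Finsupp.single j 1, ⟨single_mem_of_mem_varsOf hXoi hjSX,
            monDeg_single j 1⟩, ?_⟩
          rw [hphiX, phi_single _ _ (Finset.mem_univ j), hphiY, phi_single _ _ hiSY, hgj]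
        · rw [hdegC, monDeg_phi _ _ (hYsupp y hy)] at hd
          have hy0 : y = 0 := (monDeg_eq_zero_iff y).mp (by omega)
          subst hy0
          exact Or.inl (by rw [hphiY, phi_zero, add_zero])
      · rintro (rfl | ⟨x, ⟨hx, hd⟩, rfl⟩)
        · constructor
          · rw [mem_X']
            refine Or.inr (Or.inr ⟨0, h0Y, ?_⟩)
            rw [hphiY, phi_zero, add_zero]
          · rw [ht, monDeg_single]
        · constructor
          · rw [mem_X']; exact Or.inl ⟨x, hx, rfl⟩
          · rw [hphiX, monDeg_phi _ _ (hXs x)]; exact hd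
    have htnotmem : t ∉ (X.filter (fun m => monDeg m = 1)).image phiX := by
      rw [Finset.mem_image]
      rintro ⟨x, _, hx⟩
      have := hlastX x
      rw [hx, ht, Finsupp.single_eq_same] at this
      exact one_ne_zero this
    rw [degCount, hfil, Finset.card_insert_of_notMem htnotmem,
      Finset.card_image_of_injOn (fun x _ y _ h => phi_inj _ _ hcsInj (hXs x) (hXs y) h)]
    have : (X.filter (fun m => monDeg m = 1)).card = r - 1 := hX1
    omega
  -- filter in degree 3
  have c3 : degCount X' 3 = b + c := by
    have hfil : X'.filter (fun m => monDeg m = 3) =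
        (X.filter (fun m => monDeg m = 3)).image phiX ∪
          (Y.filter (fun m => monDeg m = 2)).image (fun y => t + phiY y) := by
      ext m
      simp only [Finset.mem_filter, Finset.mem_union, Finset.mem_image]
      constructor
      · rintro ⟨hm, hd⟩
        rw [mem_X'] at hm
        rcases hm with ⟨x, hx, rfl⟩ | ⟨y, hy, rfl⟩ | ⟨y, hy, rfl⟩
        · rw [hphiX, monDeg_phi _ _ (hXs x)] at hd
          exact Or.inl ⟨x, ⟨hx, hd⟩, rfl⟩
        · exfalso
          rw [hphiY, monDeg_phi _ _ (hYsupp y hy)] at hd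
          have := hYdeg y hy
          omega
        · rw [hdegC, monDeg_phi _ _ (hYsupp y hy)] at hd
          exact Or.inr ⟨y, ⟨hy, by omega⟩, rfl⟩
      · rintro (⟨x, ⟨hx, hd⟩, rfl⟩ | ⟨y, ⟨hy, hd⟩, rfl⟩)
        · refine ⟨by rw [mem_X']; exact Or.inl ⟨x, hx, rfl⟩, ?_⟩
          rw [hphiX, monDeg_phi _ _ (hXs x)]; exact hd
        · refine ⟨by rw [mem_X']; exact Or.inr (Or.inr ⟨y, hy, rfl⟩), ?_⟩
          rw [hdegC, monDeg_phi _ _ (hYsupp y hy)]; omega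
    have hdisj : Disjoint ((X.filter (fun m => monDeg m = 3)).image phiX)
        ((Y.filter (fun m => monDeg m = 2)).image (fun y => t + phiY y)) := by
      rw [Finset.disjoint_left]
      rintro m hm1 hm2
      rw [Finset.mem_image] at hm1 hm2
      obtain ⟨x, _, rfl⟩ := hm1
      obtain ⟨y, _, hy⟩ := hm2
      have h1 := hlastX x
      have h2 := hlastC y
      rw [hy] at h2
      omega
    rw [degCount, hfil, Finset.card_union_of_disjoint hdisj,
      Finset.card_image_of_injOn (fun x hx y hy h => phi_inj _ _ hcsInj (hXs x) (hXs y) h),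
      Finset.card_image_of_injOn (fun x hx y hy h => phi_inj _ _ hg_inj
        (hYsupp x (Finset.mem_filter.mp hx).1) (hYsupp y (Finset.mem_filter.mp hy).1)
        (add_left_cancel h))]
    rw [show (X.filter (fun m => monDeg m = 3)).card = b from hX3,
      show (Y.filter (fun m => monDeg m = 2)).card = c from hY2]
  -- higher degrees vanish
  have chi : ∀ i, 4 ≤ i → degCount X' i = 0 := by
    intro i hi
    rw [degCount, Finset.card_eq_zero]
    ext m
    simp only [Finset.mem_filter, Finset.notMem_empty, iff_false, not_and]
    intro hm hd
    have := hX'deg m hm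
    omega
  -- the lower bound in degree 2
  have c2 : a + r' ≤ degCount X' 2 := by
    set U := (X.filter (fun m => monDeg m = 2)).image phiX with hU
    set V := (Y.filter (fun m => monDeg m = 1)).image (fun y => t + phiY y) with hV
    have hsub : U ∪ V ⊆ X'.filter (fun m => monDeg m = 2) := by
      intro m hm
      rw [Finset.mem_union] at hm
      rcases hm with hm | hm
      · rw [hU, Finset.mem_image] at hm
        obtain ⟨x, hx, rfl⟩ := hm
        rw [Finset.mem_filter] at hx ⊢
        refine ⟨by rw [mem_X']; exact Or.inl ⟨x, hx.1, rfl⟩, ?_⟩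
        rw [hphiX, monDeg_phi _ _ (hXs x)]; exact hx.2
      · rw [hV, Finset.mem_image] at hm
        obtain ⟨y, hy, rfl⟩ := hm
        rw [Finset.mem_filter] at hy ⊢
        refine ⟨by rw [mem_X']; exact Or.inr (Or.inr ⟨y, hy.1, rfl⟩), ?_⟩
        rw [hdegC, monDeg_phi _ _ (hYsupp y hy.1)]; omega
    have hdisj : Disjoint U V := by
      rw [Finset.disjoint_left]
      rintro m hm1 hm2
      rw [hU, Finset.mem_image] at hm1
      rw [hV, Finset.mem_image] at hm2
      obtain ⟨x, _, rfl⟩ := hm1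
      obtain ⟨y, _, hy⟩ := hm2
      have h1 := hlastX x
      have h2 := hlastC y
      rw [hy] at h2
      omega
    have hUcard : U.card = a := by
      rw [hU, Finset.card_image_of_injOn (fun x hx y hy h =>
        phi_inj _ _ hcsInj (hXs x) (hXs y) h)]
      exact hX2
    have hVcard : V.card = r' := by
      rw [hV, Finset.card_image_of_injOn (fun x hx y hy h => phi_inj _ _ hg_inj
        (hYsupp x (Finset.mem_filter.mp hx).1) (hYsupp y (Finset.mem_filter.mp hy).1)
        (add_left_cancel h))]
      exact hY1
    calc a + r' = (U ∪ V).card := by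
          rw [Finset.card_union_of_disjoint hdisj, hUcard, hVcard]
      _ ≤ _ := Finset.card_le_card hsub
  -- conclusion
  refine ⟨degCount X' 2, c2, p + 1, X', hX'oi, hX'pure, ?_, ?_, ?_⟩
  · simp
  · intro i
    match i with
    | 0 => simpa [List.getD] using c0
    | 1 => simpa [List.getD] using c1
    | 2 => simp [List.getD]
    | 3 => simpa [List.getD] using c3
    | (n + 4) =>
      rw [chi (n + 4) (by omega), List.getD_eq_default]
      simp
  · simp only [List.length]
    rw [show (4 : ℕ) - 1 = 3 from rfl, c3]
    omega
end
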